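/- arXiv:2304.02339 — 2 statements merged into one kernel-verified Lean document; each statement's English description precedes it below -/
import Mathlib

section
/- Let X ~ N(θ*, σ²/n_e) be unbiased and Y ~ N(θ* + δ, σ²/n_o) independent of X, with δ ≠ 0. For η ≥ 0 define the pooled estimator θ̂_η = (n_e X + η n_o Y)/(n_e + η n_o). Then the MSE E[(θ̂_η - θ*)²] = (n_e σ² + η² n_o σ² + η² n_o² δ²)/(n_e + η n_o)², and this quantity at η = 0 equals σ²/n_e; moreover dMSE/dη at η = 0 equals -2 n_o σ²/n_e² < 0, so pooling a small amount of biased data strictly reduces MSE. -/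
open Real MeasureTheory ProbabilityTheory
open scoped ENNReal NNReal


lemma odd_int {b : ℝ} (hb : 0 < b) : ∫ x : ℝ, x * rexp (-b * x ^ 2) = 0 := by
  have h := (Measure.measurePreserving_neg (volume : Measure ℝ)).integral_comp
    (Homeomorph.neg ℝ).measurableEmbedding (fun x : ℝ => x * rexp (-b * x ^ 2))
  simp only [Homeomorph.neg, Equiv.neg, Equiv.coe_fn_mk, neg_sq, neg_mul] at h ⊢
  rw [integral_neg] at h
  linarith

lemma sq_int {b : ℝ} (hb : 0 < b) :
    ∫ x : ℝ, x ^ 2 * rexp (-b * x ^ 2) = Real.sqrt (π / b) / (2 * b) := by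
  have h1 : ∫ x : ℝ, x ^ 2 * rexp (-b * x ^ 2) = 2 * ∫ x in Set.Ioi (0:ℝ), x ^ 2 * rexp (-b * x ^ 2) := by
    rw [← integral_comp_abs (f := fun x => x ^ 2 * rexp (-b * x ^ 2))]
    congr 1; ext x; rw [sq_abs]
  have h2 : ∫ x in Set.Ioi (0:ℝ), x ^ 2 * rexp (-b * x ^ 2)
      = b ^ (-(2 + 1) / 2 : ℝ) * (1 / 2) * Real.Gamma ((2 + 1) / 2) := by
    rw [← integral_rpow_mul_exp_neg_mul_rpow two_pos (by norm_num : (-1:ℝ) < 2) hb]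
    refine setIntegral_congr_fun measurableSet_Ioi (fun x hx => ?_)
    rw [← Real.rpow_natCast x 2]
    norm_num
  have hG : Real.Gamma ((2 + 1) / 2 : ℝ) = Real.sqrt π / 2 := by
    have h3 : ((2 + 1) / 2 : ℝ) = 1/2 + 1 := by norm_num
    rw [h3, Real.Gamma_add_one (by norm_num), Real.Gamma_one_half_eq]
    ring
  have hs : Real.sqrt (π / b) = Real.sqrt π * b ^ (-(1:ℝ)/2) := by
    rw [div_eq_mul_inv, Real.sqrt_mul pi_pos.le, Real.sqrt_inv, Real.sqrt_eq_rpow b,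
      ← Real.rpow_neg hb.le]
    norm_num
  have hb32 : b ^ (-(2+1)/2 : ℝ) = b ^ (-(1:ℝ)/2) * b⁻¹ := by
    rw [← Real.rpow_neg_one b, ← Real.rpow_add hb]; norm_num
  rw [h1, h2, hG, hs, hb32]
  field_simp

lemma pdf_eq (μ : ℝ) (v : ℝ≥0) (x : ℝ) (g : ℝ → ℝ) :
    gaussianPDFReal μ v x * g x
      = (√(2 * π * (v:ℝ)))⁻¹ * (g x * rexp (-((2*(v:ℝ))⁻¹) * (x - μ) ^ 2)) := by
  rw [gaussianPDFReal]
  rw [show -(x - μ)^2 / (2 * (v:ℝ)) = -((2*(v:ℝ))⁻¹) * (x - μ)^2 by ring]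
  ring

lemma gauss_int_eq (μ : ℝ) {v : ℝ≥0} (hv : v ≠ 0) (g : ℝ → ℝ) :
    ∫ x, g x ∂(gaussianReal μ v) = ∫ x, gaussianPDFReal μ v x * g x := by
  rw [gaussianReal_of_var_ne_zero _ hv]
  rw [show (gaussianPDF μ v) = fun x => ((gaussianPDFReal μ v x).toNNReal : ℝ≥0∞) from rfl]
  rw [integral_withDensity_eq_integral_smul
    (show Measurable fun x => (gaussianPDFReal μ v x).toNNReal from
      measurable_real_toNNReal.comp (measurable_gaussianPDFReal μ v)) g]
  congr 1; ext x
  rw [NNReal.smul_def, smul_eq_mul,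
    Real.coe_toNNReal _ (gaussianPDFReal_nonneg μ v x)]

lemma gauss_integrable (μ : ℝ) {v : ℝ≥0} (hv : v ≠ 0) (g : ℝ → ℝ)
    (h : Integrable (fun x => gaussianPDFReal μ v x * g x)) :
    Integrable g (gaussianReal μ v) := by
  rw [gaussianReal_of_var_ne_zero _ hv]
  rw [show (gaussianPDF μ v) = fun x => ((gaussianPDFReal μ v x).toNNReal : ℝ≥0∞) from rfl]
  rw [integrable_withDensity_iff_integrable_smul
    (show Measurable fun x => (gaussianPDFReal μ v x).toNNReal from
      measurable_real_toNNReal.comp (measurable_gaussianPDFReal μ v))]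
  refine h.congr (ae_of_all _ fun x => ?_)
  simp only [NNReal.smul_def, smul_eq_mul]
  rw [Real.coe_toNNReal _ (gaussianPDFReal_nonneg μ v x)]

lemma sq_integrable {b : ℝ} (hb : 0 < b) :
    Integrable (fun y : ℝ => y ^ 2 * rexp (-b * y ^ 2)) := by
  have h := integrable_rpow_mul_exp_neg_mul_sq hb (by norm_num : (-1:ℝ) < 2)
  simp_rw [Real.rpow_two] at h
  exact h

lemma gauss_cent1_integrable (μ : ℝ) {v : ℝ≥0} (hv : v ≠ 0) :
    Integrable (fun x => x - μ) (gaussianReal μ v) := by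
  have hb : 0 < (2*(v:ℝ))⁻¹ := by
    have : 0 < (v:ℝ) := lt_of_le_of_ne (v.coe_nonneg) (by exact_mod_cast (Ne.symm hv))
    positivity
  refine gauss_integrable μ hv _ ?_
  have key : ∀ x : ℝ, gaussianPDFReal μ v x * (x - μ)
      = (√(2*π*(v:ℝ)))⁻¹ * ((x - μ) * rexp (-((2*(v:ℝ))⁻¹) * (x - μ)^2)) :=
    fun x => pdf_eq μ v x (fun y => y - μ)
  simp_rw [key]
  exact ((integrable_mul_exp_neg_mul_sq hb).comp_sub_right μ).const_mul _

lemma gauss_cent1 (μ : ℝ) {v : ℝ≥0} (hv : v ≠ 0) :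
    ∫ x, (x - μ) ∂(gaussianReal μ v) = 0 := by
  have hb : 0 < (2*(v:ℝ))⁻¹ := by
    have : 0 < (v:ℝ) := lt_of_le_of_ne (v.coe_nonneg) (by exact_mod_cast (Ne.symm hv))
    positivity
  rw [gauss_int_eq μ hv]
  have key : ∀ x : ℝ, gaussianPDFReal μ v x * (x - μ)
      = (√(2*π*(v:ℝ)))⁻¹ * ((x - μ) * rexp (-((2*(v:ℝ))⁻¹) * (x - μ)^2)) :=
    fun x => pdf_eq μ v x (fun y => y - μ)
  simp_rw [key]
  rw [integral_const_mul]
  rw [integral_sub_right_eq_self (μ := volume)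
    (fun y => y * rexp (-((2*(v:ℝ))⁻¹) * y ^ 2)) μ]
  rw [odd_int hb, mul_zero]

lemma gauss_cent2_integrable (μ : ℝ) {v : ℝ≥0} (hv : v ≠ 0) :
    Integrable (fun x => (x - μ)^2) (gaussianReal μ v) := by
  have hb : 0 < (2*(v:ℝ))⁻¹ := by
    have : 0 < (v:ℝ) := lt_of_le_of_ne (v.coe_nonneg) (by exact_mod_cast (Ne.symm hv))
    positivity
  refine gauss_integrable μ hv _ ?_
  have key : ∀ x : ℝ, gaussianPDFReal μ v x * (x - μ)^2
      = (√(2*π*(v:ℝ)))⁻¹ * ((x - μ)^2 * rexp (-((2*(v:ℝ))⁻¹) * (x - μ)^2)) :=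
    fun x => pdf_eq μ v x (fun y => (y - μ)^2)
  simp_rw [key]
  exact ((sq_integrable hb).comp_sub_right μ).const_mul _

lemma gauss_cent2 (μ : ℝ) {v : ℝ≥0} (hv : v ≠ 0) :
    ∫ x, (x - μ)^2 ∂(gaussianReal μ v) = (v:ℝ) := by
  have hv' : 0 < (v:ℝ) := lt_of_le_of_ne (v.coe_nonneg) (by exact_mod_cast (Ne.symm hv))
  have hb : 0 < (2*(v:ℝ))⁻¹ := by positivity
  rw [gauss_int_eq μ hv]
  have key : ∀ x : ℝ, gaussianPDFReal μ v x * (x - μ)^2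
      = (√(2*π*(v:ℝ)))⁻¹ * ((x - μ)^2 * rexp (-((2*(v:ℝ))⁻¹) * (x - μ)^2)) :=
    fun x => pdf_eq μ v x (fun y => (y - μ)^2)
  simp_rw [key]
  rw [integral_const_mul]
  rw [integral_sub_right_eq_self (μ := volume)
    (fun y => y ^ 2 * rexp (-((2*(v:ℝ))⁻¹) * y ^ 2)) μ]
  rw [sq_int hb]
  rw [show π / (2*(v:ℝ))⁻¹ = 2 * π * (v:ℝ) by field_simp]
  have hs : 0 < √(2 * π * (v:ℝ)) := Real.sqrt_pos.mpr (by positivity)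
  field_simp

/-- MSE of the pooled estimator: exact formula, value at `η = 0`, and strictly negative
derivative at `η = 0`, so pooling a small amount of biased data strictly reduces MSE. -/
theorem stmt6 {Ω : Type*} [MeasureSpace Ω] [IsProbabilityMeasure (ℙ : Measure Ω)]
    (X Y : Ω → ℝ) (θs δ σ2 ne no : ℝ)
    (hne : 0 < ne) (hno : 0 < no) (hσ : 0 < σ2) (hδ : δ ≠ 0)
    (hmX : Measurable X) (hmY : Measurable Y)
    (hX : Measure.map X ℙ = gaussianReal θs ((σ2 / ne).toNNReal))
    (hY : Measure.map Y ℙ = gaussianReal (θs + δ) ((σ2 / no).toNNReal))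
    (hind : IndepFun X Y ℙ) :
    (∀ η : ℝ, 0 ≤ η →
      ∫ ω, ((ne * X ω + η * no * Y ω) / (ne + η * no) - θs) ^ 2
        = (ne * σ2 + η ^ 2 * no * σ2 + η ^ 2 * no ^ 2 * δ ^ 2) / (ne + η * no) ^ 2)
    ∧ (∫ ω, ((ne * X ω + 0 * no * Y ω) / (ne + 0 * no) - θs) ^ 2 = σ2 / ne)
    ∧ HasDerivAt (fun η => ∫ ω, ((ne * X ω + η * no * Y ω) / (ne + η * no) - θs) ^ 2)
        (-(2 * no * σ2) / ne ^ 2) 0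
    ∧ -(2 * no * σ2) / ne ^ 2 < 0 := by
  have hvX : (σ2 / ne).toNNReal ≠ 0 := by
    simp only [ne_eq, Real.toNNReal_eq_zero, not_le]
    positivity
  have hvY : (σ2 / no).toNNReal ≠ 0 := by
    simp only [ne_eq, Real.toNNReal_eq_zero, not_le]
    positivity
  have hcX : (((σ2 / ne).toNNReal : ℝ)) = σ2 / ne := Real.coe_toNNReal _ (by positivity)
  have hcY : (((σ2 / no).toNNReal : ℝ)) = σ2 / no := Real.coe_toNNReal _ (by positivity)
  set m : ℝ := θs + δ with hm
  -- X side
  have intX1 : Integrable (fun ω => X ω - θs) ℙ := by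
    have h := gauss_cent1_integrable θs hvX
    rw [← hX] at h
    exact (integrable_map_measure h.aestronglyMeasurable hmX.aemeasurable).mp h
  have EX1 : ∫ ω, (X ω - θs) ∂ℙ = 0 := by
    have h := integral_map hmX.aemeasurable
      (show AEStronglyMeasurable (fun x : ℝ => x - θs) (Measure.map X ℙ) by fun_prop)
    rw [hX, gauss_cent1 θs hvX] at h
    exact h.symm
  have intX2 : Integrable (fun ω => (X ω - θs) ^ 2) ℙ := by
    have h := gauss_cent2_integrable θs hvX
    rw [← hX] at h
    exact (integrable_map_measure h.aestronglyMeasurable hmX.aemeasurable).mp h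
  have EX2 : ∫ ω, (X ω - θs) ^ 2 ∂ℙ = σ2 / ne := by
    have h := integral_map hmX.aemeasurable
      (((measurable_id.sub_const θs).pow_const 2).aestronglyMeasurable (μ := Measure.map X ℙ))
    simp only [id_eq] at h
    rw [hX, gauss_cent2 θs hvX, hcX] at h
    exact h.symm
  -- Y side (centered at m)
  have intYc1 : Integrable (fun ω => Y ω - m) ℙ := by
    have h := gauss_cent1_integrable m hvY
    rw [← hY] at h
    exact (integrable_map_measure h.aestronglyMeasurable hmY.aemeasurable).mp h
  have EYc1 : ∫ ω, (Y ω - m) ∂ℙ = 0 := by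
    have h := integral_map hmY.aemeasurable
      (show AEStronglyMeasurable (fun x : ℝ => x - m) (Measure.map Y ℙ) by fun_prop)
    rw [hY, gauss_cent1 m hvY] at h
    exact h.symm
  have intYc2 : Integrable (fun ω => (Y ω - m) ^ 2) ℙ := by
    have h := gauss_cent2_integrable m hvY
    rw [← hY] at h
    exact (integrable_map_measure h.aestronglyMeasurable hmY.aemeasurable).mp h
  have EYc2 : ∫ ω, (Y ω - m) ^ 2 ∂ℙ = σ2 / no := by
    have h := integral_map hmY.aemeasurable
      (((measurable_id.sub_const m).pow_const 2).aestronglyMeasurable (μ := Measure.map Y ℙ))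
    simp only [id_eq] at h
    rw [hY, gauss_cent2 m hvY, hcY] at h
    exact h.symm
  have hYrw1 : (fun ω => Y ω - θs) = fun ω => (Y ω - m) + δ := by
    funext ω; rw [hm]; ring
  have intY1 : Integrable (fun ω => Y ω - θs) ℙ := by
    rw [hYrw1]; exact intYc1.add (integrable_const δ)
  have EY1 : ∫ ω, (Y ω - θs) ∂ℙ = δ := by
    rw [hYrw1, integral_add intYc1 (integrable_const δ), EYc1, integral_const]
    simp
  have hYrw2 : (fun ω => (Y ω - θs) ^ 2)
      = fun ω => (Y ω - m) ^ 2 + ((2 * δ) * (Y ω - m) + δ ^ 2) := by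
    funext ω; rw [hm]; ring
  have intY2 : Integrable (fun ω => (Y ω - θs) ^ 2) ℙ := by
    rw [hYrw2]
    exact intYc2.add ((intYc1.const_mul (2 * δ)).add (integrable_const _))
  have intY2b : Integrable (fun ω => 2 * δ * (Y ω - m) + δ ^ 2) ℙ :=
    (intYc1.const_mul (2 * δ)).add (integrable_const _)
  have EY2 : ∫ ω, (Y ω - θs) ^ 2 ∂ℙ = σ2 / no + δ ^ 2 := by
    rw [hYrw2, integral_add intYc2 intY2b,
      integral_add (intYc1.const_mul (2 * δ)) (integrable_const _), integral_const_mul _ (fun ω => Y ω - m),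
      EYc2, EYc1, integral_const]
    simp
  -- cross term
  have hind' : IndepFun (fun ω => X ω - θs) (fun ω => Y ω - θs) ℙ :=
    hind.comp (measurable_id.sub_const θs) (measurable_id.sub_const θs)
  have intXY : Integrable (fun ω => (X ω - θs) * (Y ω - θs)) ℙ :=
    hind'.integrable_mul intX1 intY1
  have EXY : ∫ ω, (X ω - θs) * (Y ω - θs) ∂ℙ = 0 := by
    have h := hind'.integral_mul_eq_mul_integral intX1.aestronglyMeasurable intY1.aestronglyMeasurable
    calc ∫ ω, (X ω - θs) * (Y ω - θs) ∂ℙ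
        = (∫ ω, (X ω - θs) ∂ℙ) * ∫ ω, (Y ω - θs) ∂ℙ := h
      _ = 0 := by rw [EX1]; ring
  -- main formula
  have main : ∀ η : ℝ, ne + η * no ≠ 0 →
      ∫ ω, ((ne * X ω + η * no * Y ω) / (ne + η * no) - θs) ^ 2
        = (ne * σ2 + η ^ 2 * no * σ2 + η ^ 2 * no ^ 2 * δ ^ 2) / (ne + η * no) ^ 2 := by
    intro η hc
    have hrw : ∀ ω, ((ne * X ω + η * no * Y ω) / (ne + η * no) - θs) ^ 2
        = (ne / (ne + η * no)) ^ 2 * (X ω - θs) ^ 2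
          + ((η * no / (ne + η * no)) ^ 2 * (Y ω - θs) ^ 2
            + (2 * (ne / (ne + η * no)) * (η * no / (ne + η * no)))
              * ((X ω - θs) * (Y ω - θs))) := by
      intro ω; field_simp; ring
    simp_rw [hrw]
    have i1 : Integrable (fun ω => (ne / (ne + η * no)) ^ 2 * (X ω - θs) ^ 2) ℙ :=
      intX2.const_mul _
    have i2 : Integrable (fun ω => (η * no / (ne + η * no)) ^ 2 * (Y ω - θs) ^ 2) ℙ :=
      intY2.const_mul _
    have i3 : Integrable (fun ω => (2 * (ne / (ne + η * no)) * (η * no / (ne + η * no)))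
        * ((X ω - θs) * (Y ω - θs))) ℙ := intXY.const_mul _
    have i23 : Integrable (fun ω => (η * no / (ne + η * no)) ^ 2 * (Y ω - θs) ^ 2
        + (2 * (ne / (ne + η * no)) * (η * no / (ne + η * no)))
          * ((X ω - θs) * (Y ω - θs))) ℙ := i2.add i3
    rw [integral_add i1 i23, integral_add i2 i3,
      integral_const_mul, integral_const_mul, integral_const_mul, EX2, EY2, EXY]
    field_simp
    ring
  have hc0 : ne + (0:ℝ) * no ≠ 0 := by
    simp only [zero_mul, add_zero]; exact hne.ne'
  refine ⟨fun η hη => main η ?_, ?_, ?_, ?_⟩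
  · have : 0 ≤ η * no := mul_nonneg hη hno.le
    nlinarith
  · rw [main 0 hc0]
    field_simp
    ring
  · -- derivative
    have h1 : HasDerivAt (fun η : ℝ => ne + η * no) no 0 := by
      simpa using ((hasDerivAt_id (0:ℝ)).mul_const no).const_add ne
    have hD : HasDerivAt (fun η : ℝ => (ne + η * no) ^ 2) (2 * ne * no) 0 := by
      refine (h1.pow 2).congr_deriv ?_
      norm_num
    have h2 : HasDerivAt (fun η : ℝ => η ^ 2) 0 0 := by
      simpa using hasDerivAt_pow 2 (0:ℝ)
    have hN : HasDerivAt
        (fun η : ℝ => ne * σ2 + η ^ 2 * no * σ2 + η ^ 2 * no ^ 2 * δ ^ 2) 0 0 := by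
      have := (((h2.mul_const no).mul_const σ2).const_add (ne * σ2)).add
        ((h2.mul_const (no ^ 2)).mul_const (δ ^ 2))
      refine this.congr_deriv ?_
      norm_num
    have hG : HasDerivAt
        (fun η : ℝ => (ne * σ2 + η ^ 2 * no * σ2 + η ^ 2 * no ^ 2 * δ ^ 2)
          / (ne + η * no) ^ 2) (-(2 * no * σ2) / ne ^ 2) 0 := by
      have := hN.div hD (by simpa using pow_ne_zero 2 hne.ne')
      refine this.congr_deriv ?_
      field_simp
      ring
    have hev : (fun η : ℝ => ∫ ω, ((ne * X ω + η * no * Y ω) / (ne + η * no) - θs) ^ 2)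
        =ᶠ[nhds (0:ℝ)]
        fun η : ℝ => (ne * σ2 + η ^ 2 * no * σ2 + η ^ 2 * no ^ 2 * δ ^ 2)
          / (ne + η * no) ^ 2 := by
      have hcont : ContinuousAt (fun η : ℝ => ne + η * no) 0 := by fun_prop
      have hne0 : ∀ᶠ η in nhds (0:ℝ), ne + η * no ≠ 0 := by
        refine hcont.eventually_ne ?_
        simpa using hne.ne'
      exact hne0.mono fun η hη => main η hη
    exact hG.congr_of_eventuallyEq hev
  · apply div_neg_of_neg_of_pos
    · nlinarith
    · positivity
end

section
/- Consider the quadratic equation in η obtained from setting the expected ELPD score to zero: A η² + B η + C = 0 with A = n_o²(Ȳ - θ*)(Ȳ - θ* - 2n_e(Ȳ - X̄)) (up to the paper's normalization), arising from (n_e(X̄-θ*) + η n_o(Ȳ-θ*))² + 2(n_e(X̄-θ*) + η n_o(Ȳ-θ*)) n_e(Ȳ-X̄)(n_e + η n_o + 1) − (n_e + η n_o)σ² = 0. Show that if Ȳ = θ* + δ with δ fixed and nonzero, X̄ = θ* + O(n^{-1/2}), and n_e = c·n_o → ∞, then the equation has a root η_0 satisfying η_0 = -n_e(X̄ - θ*)/(n_o(Ȳ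 - θ*)) + O(1/n), i.e., asymptotically the root of the linear equation n_e(X̄ - θ*) + η n_o(Ȳ - θ*) = 0. -/
open Filter

set_option maxHeartbeats 1000000 in
/-- Asymptotic root tracking: the quadratic ELPD first-order condition has a root within
`O(1/n)` of the root of the linear equation `n_e(X̄-θ*) + η n_o(Ȳ-θ*) = 0`. -/
theorem stmt17 (c σ2 δ θs : ℝ) (hc : 0 < c) (hσ : 0 < σ2) (hδ : δ ≠ 0)
    (no : ℕ → ℝ) (hno : ∀ n, 0 < no n) (hno' : Tendsto no atTop atTop)
    (Xbar Ybar : ℕ → ℝ) (hY : ∀ n, Ybar n = θs + δ)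
    (hX : ∃ C : ℝ, ∀ n, |Xbar n - θs| ≤ C / Real.sqrt (no n)) :
    ∃ η0 : ℕ → ℝ, ∃ C : ℝ,
      (∀ᶠ n in atTop,
        (c * no n * (Xbar n - θs) + η0 n * no n * (Ybar n - θs)) ^ 2
          + 2 * (c * no n * (Xbar n - θs) + η0 n * no n * (Ybar n - θs))
              * (c * no n) * (Ybar n - Xbar n) * (c * no n + η0 n * no n + 1)
          - (c * no n + η0 n * no n) * σ2 = 0)
      ∧ (∀ᶠ n in atTop,
          |η0 n - (-(c * no n * (Xbar n - θs)) / (no n * (Ybar n - θs)))|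
            ≤ C / (c * no n + no n)) := by
  obtain ⟨Cx, hXC⟩ := hX
  have hδabs : 0 < |δ| := abs_pos.mpr hδ
  set x : ℕ → ℝ := fun n => Xbar n - θs with hx_def
  set s : ℝ := if 0 < δ then 1 else -1 with hs_def
  have hs2 : s ^ 2 = 1 := by
    rw [hs_def]; split <;> norm_num
  have hsabs : |s| = 1 := by
    rw [hs_def]; split <;> norm_num
  have hsδ : s * δ = |δ| := by
    rw [hs_def]; split
    · rename_i h; rw [abs_of_pos h]; ring
    · rename_i h
      have h' : δ < 0 := lt_of_le_of_ne (not_lt.mp h) hδ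
      rw [abs_of_neg h']; ring
  set A : ℕ → ℝ := fun n => 1 + 2 * (c * no n * (δ - x n)) / δ with hA_def
  set B : ℕ → ℝ := fun n =>
    2 * (c * no n * (δ - x n)) * (c * no n - c * no n * x n / δ + 1) - σ2 / δ with hB_def
  set Cq : ℕ → ℝ := fun n => -(c * no n - c * no n * x n / δ) * σ2 with hC_def
  set D : ℕ → ℝ := fun n => B n ^ 2 - 4 * A n * Cq n with hD_def
  set u : ℕ → ℝ := fun n => (-(B n) + s * Real.sqrt (D n)) / (2 * A n) with hu_def
  set η0 : ℕ → ℝ := fun n => (u n - c * no n * x n) / (no n * δ) with hη_def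
  -- basic limits
  have hinv : Tendsto (fun n => (no n)⁻¹) atTop (nhds 0) :=
    tendsto_inv_atTop_zero.comp hno'
  have hsqrtT : Tendsto (fun n => Real.sqrt (no n)) atTop atTop := by
    apply tendsto_atTop_atTop.mpr
    intro b
    obtain ⟨N, hN⟩ := (tendsto_atTop_atTop.mp hno') (max b 0 ^ 2)
    refine ⟨N, fun a ha => le_trans (le_max_left b 0) ?_⟩
    rw [← Real.sqrt_sq (le_max_right b 0)]
    exact Real.sqrt_le_sqrt (hN a ha)
  have hxlim : Tendsto x atTop (nhds 0) := by
    have hg : Tendsto (fun n => Cx / Real.sqrt (no n)) atTop (nhds 0) :=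
      Tendsto.div_atTop tendsto_const_nhds hsqrtT
    exact squeeze_zero_norm (fun n => hXC n) hg
  -- normalized limits
  have hA' : Tendsto (fun n => A n / no n) atTop (nhds (2 * c)) := by
    have e : ∀ n, A n / no n = (no n)⁻¹ + 2 * c * (δ - x n) / δ := by
      intro n
      have h := (hno n).ne'
      rw [hA_def]; field_simp
    have lim : Tendsto (fun n => (no n)⁻¹ + 2 * c * (δ - x n) / δ) atTop
        (nhds (0 + 2 * c * (δ - 0) / δ)) := by
      exact hinv.add (((tendsto_const_nhds.sub hxlim).const_mul (2 * c)).div_const δ)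
    have : (0 : ℝ) + 2 * c * (δ - 0) / δ = 2 * c := by field_simp; ring
    rw [this] at lim
    exact lim.congr fun n => (e n).symm
  have hB' : Tendsto (fun n => B n / (no n) ^ 2) atTop (nhds (2 * c ^ 2 * δ)) := by
    have e : ∀ n, B n / (no n) ^ 2 =
        2 * c * (δ - x n) * (c - c * x n / δ + (no n)⁻¹) - σ2 / δ * ((no n)⁻¹) ^ 2 := by
      intro n
      have h := (hno n).ne'
      rw [hB_def]; field_simp
    have lim : Tendsto (fun n =>
        2 * c * (δ - x n) * (c - c * x n / δ + (no n)⁻¹) - σ2 / δ * ((no n)⁻¹) ^ 2) atTop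
        (nhds (2 * c * (δ - 0) * (c - c * 0 / δ + 0) - σ2 / δ * 0 ^ 2)) := by
      refine Tendsto.sub ?_ ?_
      · exact (((tendsto_const_nhds.sub hxlim).const_mul (2 * c)).mul
          ((tendsto_const_nhds.sub ((hxlim.const_mul c).div_const δ)).add hinv))
      · exact (tendsto_const_nhds.mul (hinv.pow 2))
    have : 2 * c * (δ - 0) * (c - c * 0 / δ + 0) - σ2 / δ * (0:ℝ) ^ 2 = 2 * c ^ 2 * δ := by
      field_simp; ring
    rw [this] at lim
    exact lim.congr fun n => (e n).symm
  have hC' : Tendsto (fun n => Cq n / no n) atTop (nhds (-(c * σ2))) := by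
    have e : ∀ n, Cq n / no n = -(c - c * x n / δ) * σ2 := by
      intro n
      have h := (hno n).ne'
      rw [hC_def]; field_simp
    have lim : Tendsto (fun n => -(c - c * x n / δ) * σ2) atTop
        (nhds (-(c - c * 0 / δ) * σ2)) := by
      exact (((tendsto_const_nhds.sub ((hxlim.const_mul c).div_const δ)).neg).mul
        tendsto_const_nhds)
    have : -(c - c * (0:ℝ) / δ) * σ2 = -(c * σ2) := by field_simp; ring
    rw [this] at lim
    exact lim.congr fun n => (e n).symm
  have hD' : Tendsto (fun n => D n / (no n) ^ 4) atTop (nhds (4 * c ^ 4 * δ ^ 2)) := by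
    have e : ∀ n, D n / (no n) ^ 4 =
        (B n / (no n) ^ 2) ^ 2 - 4 * (A n / no n) * (Cq n / no n) * ((no n)⁻¹) ^ 2 := by
      intro n
      have h := (hno n).ne'
      rw [hD_def]; field_simp
    have lim : Tendsto (fun n =>
        (B n / (no n) ^ 2) ^ 2 - 4 * (A n / no n) * (Cq n / no n) * ((no n)⁻¹) ^ 2) atTop
        (nhds ((2 * c ^ 2 * δ) ^ 2 - 4 * (2 * c) * (-(c * σ2)) * 0 ^ 2)) := by
      exact (hB'.pow 2).sub (((hA'.const_mul 4).mul hC').mul (hinv.pow 2))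
    have : (2 * c ^ 2 * δ) ^ 2 - 4 * (2 * c) * (-(c * σ2)) * (0:ℝ) ^ 2
        = 4 * c ^ 4 * δ ^ 2 := by ring
    rw [this] at lim
    exact lim.congr fun n => (e n).symm
  -- eventual facts
  have evA : ∀ᶠ n in atTop, 0 < A n := by
    filter_upwards [hA'.eventually (eventually_gt_nhds (show (0:ℝ) < 2 * c by linarith))]
      with n h
    have h2 : 0 < A n / no n * no n := mul_pos h (hno n)
    rwa [div_mul_cancel₀ _ (hno n).ne'] at h2
  have evB : ∀ᶠ n in atTop, c ^ 2 * |δ| * (no n) ^ 2 ≤ s * B n := by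
    have lim2 : Tendsto (fun n => s * (B n / (no n) ^ 2)) atTop (nhds (2 * c ^ 2 * |δ|)) := by
      have := hB'.const_mul s
      rwa [show s * (2 * c ^ 2 * δ) = 2 * c ^ 2 * (s * δ) by ring, hsδ] at this
    have hlt : c ^ 2 * |δ| < 2 * c ^ 2 * |δ| := by nlinarith [pow_pos hc 2]
    filter_upwards [lim2.eventually (eventually_gt_nhds hlt)] with n h
    have hpos : (0:ℝ) < (no n) ^ 2 := pow_pos (hno n) 2
    have h2 : c ^ 2 * |δ| * (no n) ^ 2 ≤ s * (B n / (no n) ^ 2) * (no n) ^ 2 := by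
      nlinarith
    rwa [mul_comm s (B n / (no n) ^ 2), div_mul_eq_mul_div, div_mul_cancel₀ _ hpos.ne',
      mul_comm (B n) s] at h2
  have evC : ∀ᶠ n in atTop, |Cq n| ≤ (c * σ2 + 1) * no n := by
    have lim2 : Tendsto (fun n => |Cq n / no n|) atTop (nhds (c * σ2)) := by
      have := hC'.abs
      rwa [abs_neg, abs_of_pos (mul_pos hc hσ)] at this
    filter_upwards [lim2.eventually (eventually_lt_nhds (show c * σ2 < c * σ2 + 1 by linarith))]
      with n h
    have : |Cq n| / no n ≤ c * σ2 + 1 := by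
      rw [← abs_of_pos (hno n), ← abs_div]; exact h.le
    calc |Cq n| = |Cq n| / no n * no n := by rw [div_mul_cancel₀ _ (hno n).ne']
    _ ≤ (c * σ2 + 1) * no n := by
        exact mul_le_mul_of_nonneg_right this (hno n).le
  have evD : ∀ᶠ n in atTop, 0 < D n := by
    have hpos : (0:ℝ) < 4 * c ^ 4 * δ ^ 2 := by positivity
    filter_upwards [hD'.eventually (eventually_gt_nhds hpos)] with n h
    have hp4 : (0:ℝ) < (no n) ^ 4 := pow_pos (hno n) 4
    have h2 : 0 < D n / (no n) ^ 4 * (no n) ^ 4 := mul_pos h hp4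
    rwa [div_mul_cancel₀ _ hp4.ne'] at h2
  -- main per-n derivation
  set K : ℝ := 2 * (c * σ2 + 1) / (c ^ 2 * |δ|) with hK_def
  have evMain : ∀ᶠ n in atTop,
      (A n * u n ^ 2 + B n * u n + Cq n = 0) ∧ |u n| ≤ K / no n := by
    filter_upwards [evA, evB, evC, evD] with n hAp hBp hCp hDp
    have hsq : Real.sqrt (D n) ^ 2 = D n := Real.sq_sqrt hDp.le
    have hA2 : (2 * A n) ≠ 0 := by positivity
    have h2 : 2 * A n * u n + B n = s * Real.sqrt (D n) := by
      rw [hu_def]; field_simp; ring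
    have h2sq : (2 * A n * u n + B n) ^ 2 = D n := by
      rw [h2, mul_pow, hs2, hsq, one_mul]
    have hDe : D n = B n ^ 2 - 4 * A n * Cq n := by rw [hD_def]
    rw [hDe] at h2sq
    have heq4 : 4 * A n * (A n * u n ^ 2 + B n * u n + Cq n) = 0 := by
      linear_combination h2sq
    have heq : A n * u n ^ 2 + B n * u n + Cq n = 0 := by
      have h4 : (4 * A n) ≠ 0 := by positivity
      exact (mul_eq_zero.mp heq4).resolve_left h4
    refine ⟨heq, ?_⟩
    -- bound on |u|
    have hcd : (0:ℝ) < c ^ 2 * |δ| := mul_pos (pow_pos hc 2) hδabs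
    have hsBpos : (0:ℝ) < s * B n :=
      lt_of_lt_of_le (mul_pos hcd (pow_pos (hno n) 2)) hBp
    have hwpos : (0:ℝ) < Real.sqrt (D n) + s * B n := by
      have := Real.sqrt_nonneg (D n); linarith
    have hsqrtD : Real.sqrt (D n) = s * (2 * A n * u n + B n) := by
      rw [h2, ← mul_assoc, ← sq, hs2, one_mul]
    have huw : u n * (Real.sqrt (D n) + s * B n) = -2 * Cq n * s := by
      rw [hsqrtD]; linear_combination 2 * s * heq
    have habs : |u n| * (Real.sqrt (D n) + s * B n) = 2 * |Cq n| := by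
      have h := congrArg abs huw
      rw [abs_mul, abs_of_pos hwpos] at h
      rw [h, show (-2 * Cq n * s) = (-2 * s) * Cq n by ring, abs_mul]
      rw [show |(-2 : ℝ) * s| = 2 * |s| by rw [abs_mul]; norm_num, hsabs]
      ring
    rw [hK_def, le_div_iff₀ (hno n), le_div_iff₀ hcd]
    have key : |u n| * (c ^ 2 * |δ| * no n ^ 2) ≤ 2 * ((c * σ2 + 1) * no n) := by
      have k1 : |u n| * (c ^ 2 * |δ| * no n ^ 2) ≤ |u n| * (s * B n) :=
        mul_le_mul_of_nonneg_left hBp (abs_nonneg (u n))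
      have k2 : |u n| * (s * B n) ≤ |u n| * (Real.sqrt (D n) + s * B n) := by
        have := Real.sqrt_nonneg (D n)
        nlinarith [abs_nonneg (u n)]
      have k3 : 2 * |Cq n| ≤ 2 * ((c * σ2 + 1) * no n) := by linarith
      linarith [habs]
    have key2 : (|u n| * no n * (c ^ 2 * |δ|)) * no n ≤ (2 * (c * σ2 + 1)) * no n := by
      nlinarith [key]
    exact le_of_mul_le_mul_right key2 (hno n)
  have hKlim : Tendsto (fun n => K / no n) atTop (nhds 0) :=
    Tendsto.div_atTop tendsto_const_nhds hno'
  have hu0 : Tendsto u atTop (nhds 0) :=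
    squeeze_zero_norm' (evMain.mono fun n h => h.2) hKlim
  refine ⟨η0, 1, ?_, ?_⟩
  · filter_upwards [evMain] with n hn
    have hYn : Ybar n - θs = δ := by rw [hY n]; ring
    have hYX : Ybar n - Xbar n = δ - x n := by rw [hY n, hx_def]; ring
    have hxn : Xbar n - θs = x n := by rw [hx_def]
    rw [hYn, hYX, hxn]
    have hnone := (hno n).ne'
    have hLHS : (c * no n * x n + η0 n * no n * δ) ^ 2
        + 2 * (c * no n * x n + η0 n * no n * δ) * (c * no n) * (δ - x n)
            * (c * no n + η0 n * no n + 1)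
        - (c * no n + η0 n * no n) * σ2
        = A n * u n ^ 2 + B n * u n + Cq n := by
      rw [hη_def, hA_def, hB_def, hC_def]
      field_simp
      ring
    rw [hLHS, hn.1]
  · have hεpos : (0:ℝ) < |δ| / (c + 1) := div_pos hδabs (by linarith)
    filter_upwards [(NormedAddCommGroup.tendsto_nhds_zero.mp hu0) _ hεpos] with n hn
    have hYn : Ybar n - θs = δ := by rw [hY n]; ring
    have hxn : Xbar n - θs = x n := by rw [hx_def]
    rw [hYn, hxn]
    have hnone := (hno n).ne'
    have hdiff : η0 n - -(c * no n * x n) / (no n * δ) = u n / (no n * δ) := by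
      rw [hη_def]; field_simp; ring
    rw [hdiff, abs_div, abs_mul, abs_of_pos (hno n)]
    rw [div_le_div_iff₀ (mul_pos (hno n) hδabs) (by nlinarith [hno n] : (0:ℝ) < c * no n + no n)]
    have hn' : |u n| < |δ| / (c + 1) := hn
    rw [lt_div_iff₀ (show (0:ℝ) < c + 1 by linarith)] at hn'
    nlinarith [hno n, abs_nonneg (u n)]
end
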